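/- Define p_n := 3·5·7···(2n+1) = ∏_{j=1}^{n} (2j+1) for n ≥ 1. Then (p_n) is a strictly increasing sequence of odd integers, and for every finite strictly increasing family of indices i₁ < i₂ < … < i_k and every choice of signs ε₁, …, ε_k ∈ {+1, −1}, the intersection A_{p_{i₁}}^{ε₁} ∩ ⋯ ∩ A_{p_{i_k}}^{ε_k} is nonempty. -/

import Mathlib

/-- For `p` odd `≥ 3`, the set of angles `θ ∈ (0, 2π)`, `θ ≠ π`, where the signature-type
quantity `D_p(e^(iθ)) = cos (p θ / 2) / cos (θ / 2)` is negative. -/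
noncomputable def Aset (p : ℕ) : Set ℝ :=
  {θ : ℝ | θ ∈ Set.Ioo 0 (2 * Real.pi) ∧ θ ≠ Real.pi ∧
    Real.cos (p * θ / 2) / Real.cos (θ / 2) < 0}

/-- `A_p^{+1} = A_p` and `A_p^{-1}` is the complement of `A_p` in `(0, 2π) \ {π}`. -/
noncomputable def AsetSigned (p : ℕ) (ε : Bool) : Set ℝ :=
  if ε then Aset p else (Set.Ioo 0 (2 * Real.pi) \ {Real.pi}) \ Aset p

/-- `p_n = 3 · 5 · 7 ⋯ (2n+1) = ∏_{j=1}^{n} (2j+1)`. -/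
def pseq (n : ℕ) : ℕ := ∏ j ∈ Finset.Icc 1 n, (2 * j + 1)


lemma one_le_pseq (n : ℕ) : 1 ≤ pseq n :=
  Finset.one_le_prod' (f := fun j => 2 * j + 1) (fun j _ => by simp)

lemma pseq_split {a b : ℕ} (h : a ≤ b) :
    pseq b = pseq a * ∏ j ∈ Finset.Ioc a b, (2 * j + 1) := by
  unfold pseq
  rw [show Finset.Icc 1 b = Finset.Ioc 0 b from by rw [← Finset.Icc_add_one_left_eq_Ioc]; rfl,
      show Finset.Icc 1 a = Finset.Ioc 0 a from by rw [← Finset.Icc_add_one_left_eq_Ioc]; rfl,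
      Finset.prod_Ioc_consecutive _ (Nat.zero_le a) h]

lemma three_le_pseq {n : ℕ} (h : 1 ≤ n) : 3 ≤ pseq n := by
  calc (3:ℕ) = 2 * 1 + 1 := rfl
  _ ≤ pseq n := Finset.single_le_prod' (f := fun j => 2 * j + 1) (fun j _ => by simp)
      (Finset.mem_Icc.mpr ⟨le_refl 1, h⟩)

lemma cos_sign_window (s : Bool) (n : ℤ) (y : ℝ)
    (h1 : 2*Real.pi*n + (if s then 3*Real.pi/4 else 0) ≤ y)
    (h2 : y ≤ 2*Real.pi*n + (if s then 3*Real.pi/4 else 0) + Real.pi/2) :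
    if s then Real.cos y < 0 else 0 ≤ Real.cos y := by
  have hπ := Real.pi_pos
  have hy : Real.cos (y - 2*Real.pi*n) = Real.cos y := by
    rw [show y - 2*Real.pi*n = y + (-n : ℤ) * (2*Real.pi) by push_cast; ring,
      Real.cos_add_int_mul_two_pi]
  rw [← hy]
  cases s with
  | true =>
    rw [if_pos rfl] at h1 h2 ⊢
    exact Real.cos_neg_of_pi_div_two_lt_of_lt (by linarith) (by linarith)
  | false =>
    rw [if_neg (by simp)] at h1 h2 ⊢
    exact Real.cos_nonneg_of_mem_Icc ⟨by linarith, by linarith⟩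

lemma exists_window (c o : ℝ) :
    ∃ n : ℤ, c ≤ 2*Real.pi*n + o ∧ 2*Real.pi*n + o < c + 2*Real.pi := by
  have hπ := Real.pi_pos
  refine ⟨⌈(c - o)/(2*Real.pi)⌉, ?_, ?_⟩
  · have := Int.le_ceil ((c - o)/(2*Real.pi))
    rw [div_le_iff₀ (by linarith)] at this
    linarith
  · have := Int.ceil_lt_add_one ((c - o)/(2*Real.pi))
    have hk : (c - o)/(2*Real.pi) * (2*Real.pi) = c - o :=
      div_mul_cancel₀ _ (by positivity)
    nlinarith [this]

open Real in
lemma key (k : ℕ) (i : ℕ → ℕ) (ε : ℕ → Bool)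
    (hi1 : ∀ j < k, 1 ≤ i j) (himono : ∀ a b, a < b → b < k → i a < i b) (hk : 1 ≤ k) :
    ∃ a b : ℝ, 0 ≤ a ∧ b ≤ Real.pi/2 ∧
      b - a = Real.pi/(2 * (pseq (i (k-1)) : ℝ)) ∧
      ∀ φ ∈ Set.Icc a b, ∀ j < k,
        (if ε j then Real.cos ((pseq (i j) : ℝ) * φ) < 0
         else 0 ≤ Real.cos ((pseq (i j) : ℝ) * φ)) := by
  have hπ := Real.pi_pos
  induction k with
  | zero => omega
  | succ k IH =>
    rcases Nat.eq_zero_or_pos k with rfl | hk1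
    · -- base case: single index
      set p : ℕ := pseq (i 0) with hp
      have hp3 : (3:ℝ) ≤ p := by exact_mod_cast three_le_pseq (hi1 0 (by omega))
      have hp0 : (0:ℝ) < p := by linarith
      set o : ℝ := if ε 0 then 3*Real.pi/4 else 0 with ho
      have ho0 : 0 ≤ o := by rw [ho]; split <;> positivity
      have ho1 : o ≤ 3*Real.pi/4 := by rw [ho]; split <;> linarith
      refine ⟨o/p, (o + Real.pi/2)/p, by positivity, ?_, by field_simp; ring, ?_⟩
      · rw [div_le_iff₀ hp0]; nlinarith
      · intro φ hφ j hj
        interval_cases j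
        have h1 : o ≤ (p:ℝ) * φ := by
          have := hφ.1; calc o = p * (o/p) := by field_simp
          _ ≤ p * φ := by nlinarith [hφ.1]
        have h2 : (p:ℝ) * φ ≤ o + Real.pi/2 := by
          calc (p:ℝ) * φ ≤ p * ((o + Real.pi/2)/p) := by nlinarith [hφ.2]
          _ = o + Real.pi/2 := by field_simp
        have := cos_sign_window (ε 0) 0 ((p:ℝ) * φ)
          (by simp only [Int.cast_zero]; rw [← ho]; linarith)
          (by simp only [Int.cast_zero]; rw [← ho]; linarith)
        exact this
    · -- inductive step
      obtain ⟨a, b, ha0, hb, hlen, hsign⟩ := IH (fun j hj => hi1 j (by omega))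
        (fun a b hab hbk => himono a b hab (by omega)) hk1
      set q : ℕ := pseq (i (k-1)) with hq
      set p : ℕ := pseq (i k) with hpdef
      have hik : i (k-1) < i k := himono (k-1) k (by omega) (by omega)
      have hik1 : 1 ≤ i (k-1) := hi1 (k-1) (by omega)
      set m : ℕ := ∏ j ∈ Finset.Ioc (i (k-1)) (i k), (2 * j + 1) with hm
      have hpm : p = q * m := pseq_split (le_of_lt hik)
      have hm5 : 5 ≤ m := by
        calc (5:ℕ) ≤ 2 * (i (k-1) + 1) + 1 := by omega
        _ ≤ m := Finset.single_le_prod' (f := fun j => 2 * j + 1) (fun j _ => by simp)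
            (Finset.mem_Ioc.mpr ⟨by omega, hik⟩)
      have hq1 : (1:ℝ) ≤ q := by exact_mod_cast one_le_pseq (i (k-1))
      have hp0 : (0:ℝ) < p := by
        have : 1 ≤ p := one_le_pseq (i k); exact_mod_cast Nat.lt_of_lt_of_le Nat.zero_lt_one this
      have hpb : (p:ℝ) * (b - a) = m * Real.pi / 2 := by
        rw [hlen, hpm]; push_cast; field_simp
      set o : ℝ := if ε k then 3*Real.pi/4 else 0 with ho
      obtain ⟨n, hn1, hn2⟩ := exists_window ((p:ℝ) * a) o
      set x : ℝ := 2*Real.pi*n + o with hx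
      have hm5' : (5:ℝ) ≤ m := by exact_mod_cast hm5
      have hxb : x + Real.pi/2 ≤ (p:ℝ) * b := by nlinarith
      refine ⟨x/p, (x + Real.pi/2)/p, ?_, ?_, by rw [Nat.add_sub_cancel, ← hpdef]; field_simp; ring, ?_⟩
      · have : a ≤ x/p := by rw [le_div_iff₀ hp0]; linarith
        linarith
      · have : (x + Real.pi/2)/p ≤ b := by rw [div_le_iff₀ hp0]; linarith
        linarith
      · intro φ hφ j hj
        have hsub : φ ∈ Set.Icc a b := by
          constructor
          · calc a ≤ x/p := by rw [le_div_iff₀ hp0]; linarith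
            _ ≤ φ := hφ.1
          · calc φ ≤ (x + Real.pi/2)/p := hφ.2
            _ ≤ b := by rw [div_le_iff₀ hp0]; linarith
        rcases Nat.lt_or_ge j k with hjk | hjk
        · exact hsign φ hsub j hjk
        · have hjk' : j = k := by omega
          subst hjk'
          have h1 : x ≤ (p:ℝ) * φ := by
            calc x = p * (x/p) := by field_simp
            _ ≤ p * φ := by nlinarith [hφ.1]
          have h2 : (p:ℝ) * φ ≤ x + Real.pi/2 := by
            calc (p:ℝ) * φ ≤ p * ((x + Real.pi/2)/p) := by nlinarith [hφ.2]
            _ = x + Real.pi/2 := by field_simp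
          have := cos_sign_window (ε j) n ((p:ℝ) * φ) (by rw [← ho]; linarith)
            (by rw [← ho]; linarith)
          exact this

/-- The sequence `p_n = 3 · 5 ⋯ (2n+1)` (for `n ≥ 1`) is a strictly increasing sequence of
odd integers, and every finite intersection `A_{p_{i₁}}^{ε₁} ∩ ⋯ ∩ A_{p_{i_k}}^{ε_k}` with
`1 ≤ i₁ < ⋯ < i_k` and signs `ε_j ∈ {+1, -1}` is nonempty. -/
theorem pseq_independent :
    StrictMonoOn pseq (Set.Ici 1) ∧ (∀ n, 1 ≤ n → Odd (pseq n)) ∧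
      ∀ (k : ℕ) (i : Fin k → ℕ) (ε : Fin k → Bool),
        (∀ j, 1 ≤ i j) → StrictMono i →
        (⋂ j : Fin k, AsetSigned (pseq (i j)) (ε j)).Nonempty := by
  have hπ := Real.pi_pos
  refine ⟨?_, ?_, ?_⟩
  · -- strict monotonicity
    intro a _ b _ hab
    have h := pseq_split (le_of_lt hab)
    have hm : 2 ≤ ∏ j ∈ Finset.Ioc a b, (2 * j + 1) := by
      calc 2 ≤ 2 * (a + 1) + 1 := by omega
      _ ≤ _ := Finset.single_le_prod' (f := fun j => 2 * j + 1) (fun j _ => by simp)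
          (Finset.mem_Ioc.mpr ⟨by omega, hab⟩)
    have h1 := one_le_pseq a
    calc pseq a < pseq a * 2 := by omega
    _ ≤ pseq a * ∏ j ∈ Finset.Ioc a b, (2 * j + 1) := Nat.mul_le_mul_left _ hm
    _ = pseq b := h.symm
  · -- oddness
    intro n _
    exact Finset.prod_induction _ Odd (fun a b ha hb => ha.mul hb) odd_one
      (fun j _ => ⟨j, by ring⟩)
  · -- main independence statement
    intro k i ε hi hmono
    rcases Nat.eq_zero_or_pos k with rfl | hk
    · exact ⟨1, Set.mem_iInter.mpr fun j => j.elim0⟩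
    · set i' : ℕ → ℕ := fun j => if h : j < k then i ⟨j, h⟩ else 0 with hi'
      set ε' : ℕ → Bool := fun j => if h : j < k then ε ⟨j, h⟩ else true with hε'
      obtain ⟨a, b, ha0, hb, hlen, hsign⟩ := key k i' ε'
        (fun j hj => by simp only [hi', dif_pos hj]; exact hi ⟨j, hj⟩)
        (fun a b hab hbk => by
          simp only [hi', dif_pos hbk, dif_pos (lt_trans hab hbk)]
          exact hmono hab) hk
      have hp : (0:ℝ) < (pseq (i' (k-1)) : ℝ) := by
        exact_mod_cast Nat.lt_of_lt_of_le Nat.zero_lt_one (one_le_pseq _)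
      have hab : a < b := by
        have : 0 < b - a := by rw [hlen]; positivity
        linarith
      have hφ : (a + b)/2 ∈ Set.Icc a b := ⟨by linarith, by linarith⟩
      refine ⟨a + b, Set.mem_iInter.mpr fun j => ?_⟩
      have hθ1 : 0 < a + b := by linarith
      have hθπ : a + b < Real.pi := by linarith
      have hcos : 0 < Real.cos ((a + b)/2) :=
        Real.cos_pos_of_mem_Ioo ⟨by linarith, by linarith⟩
      have hj := j.isLt
      have hs := hsign ((a + b)/2) hφ j.val hj
      have hiq : i' j.val = i j := by
        simp only [hi', dif_pos hj, Fin.eta]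
      have hεq : ε' j.val = ε j := by
        simp only [hε', dif_pos hj, Fin.eta]
      rw [hiq, hεq] at hs
      have hmemIoo : a + b ∈ Set.Ioo 0 (2 * Real.pi) := ⟨hθ1, by linarith⟩
      have hne : a + b ≠ Real.pi := ne_of_lt hθπ
      have harg : (pseq (i j) : ℝ) * (a + b) / 2 = (pseq (i j) : ℝ) * ((a + b)/2) := by ring
      cases hε : ε j with
      | true =>
        rw [hε, if_pos rfl] at hs
        show a + b ∈ AsetSigned (pseq (i j)) true
        rw [AsetSigned, if_pos rfl]
        exact ⟨hmemIoo, hne, div_neg_of_neg_of_pos (by rw [harg]; exact hs) hcos⟩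
      | false =>
        rw [hε, if_neg (by simp)] at hs
        show a + b ∈ AsetSigned (pseq (i j)) false
        rw [AsetSigned, if_neg (by simp)]
        refine ⟨⟨hmemIoo, hne⟩, fun hA => ?_⟩
        have := hA.2.2
        rw [harg] at this
        have h0 : 0 ≤ Real.cos ((pseq (i j) : ℝ) * ((a + b)/2)) / Real.cos ((a + b)/2) :=
          div_nonneg hs hcos.le
        linarith
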